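/- For every n ≥ 2, writing n = p_n·k + s with integers p_n ≥ 0 and 2 ≤ s ≤ k + 1, the n-th tail of the series satisfies |Σ_{i=n}^{∞} u_i^{(r)}| ≤ M·k·e² · 2^{p_n} / p_n!, where M = max{ |u_i^{(r)}| : 2 ≤ i ≤ 2k }. -/

import Mathlib

private lemma telescope_sum (t : ℕ → ℝ) :
    ∀ b a : ℕ, a ≤ b → ∑ j ∈ Finset.Icc (a+1) b, (t j - t (j-1)) = t b - t a := by
  intro b
  induction b with
  | zero => intro a ha; interval_cases a; simp
  | succ b ih =>
    intro a ha
    rcases Nat.lt_succ_iff_lt_or_eq.mp (Nat.lt_succ_of_le ha) with h | h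
    · have hab : a ≤ b := Nat.lt_succ_iff.mp h
      rw [Finset.sum_Icc_succ_top (Nat.succ_le_succ hab), ih a hab]
      simp
    · subst h; simp

private lemma parking_key (k : ℕ) (hk : 1 ≤ k)
    (a s t u : ℕ → ℝ)
    (ha_rec : ∀ n : ℕ, k + 2 ≤ n →
      a n = 2 / ((n : ℝ) - k - 1) * ∑ i ∈ Finset.Icc 1 (n - k - 1), a i)
    (hs : ∀ n : ℕ, s n = ∑ i ∈ Finset.Icc 1 n, a i)
    (ht : ∀ n : ℕ, t n = s n / ((n : ℝ) * ((n : ℝ) + 2 * k + 1)))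
    (hu : ∀ n : ℕ, 2 ≤ n → u n = t n - t (n - 1))
    (n : ℕ) (hn : k + 2 ≤ n) (B : ℝ) (hB : 0 ≤ B)
    (hw : ∀ j : ℕ, n - k ≤ j → j ≤ n - 1 → |u j| ≤ B) :
    |u n| ≤ 2 * k * B / n := by
  set x : ℝ := (n : ℝ) with hxdef
  have hk' : (1:ℝ) ≤ (k:ℝ) := by exact_mod_cast hk
  have hxk : (k:ℝ) + 2 ≤ x := by rw [hxdef]; exact_mod_cast hn
  have hx3 : (3:ℝ) ≤ x := by linarith
  have hx0 : x ≠ 0 := by linarith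
  have hx1 : x - 1 ≠ 0 := by linarith
  have hxk1 : x - k - 1 ≠ 0 := by linarith
  have hxpk : x + k ≠ 0 := by linarith
  have hx2k : x + 2*k ≠ 0 := by linarith
  have hx2k1 : x + 2*k + 1 ≠ 0 := by linarith
  set n1 : ℕ := n - 1 with hn1
  set nk : ℕ := n - k - 1 with hnk
  have hc1 : (n1 : ℝ) = x - 1 := by
    rw [hn1]; push_cast [Nat.cast_sub (by omega : 1 ≤ n)]; ring
  have hck : (nk : ℝ) = x - k - 1 := by
    rw [hnk]; push_cast [Nat.cast_sub (by omega : 1 ≤ n - k), Nat.cast_sub (by omega : k ≤ n)]; ring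
  have h1 : s n = s n1 + a n := by
    have hne : n = n1 + 1 := by omega
    rw [hs, hs n1, hne, Finset.sum_Icc_succ_top (by omega : 1 ≤ n1 + 1)]
  have h2 : a n = 2 / (x - k - 1) * s nk := by
    rw [ha_rec n hn, hs nk, hnk]
  have htn : t n = s n / (x * (x + 2*k + 1)) := ht n
  have htn1 : t n1 = s n1 / ((x - 1) * (x + 2*k)) := by
    rw [ht n1, hc1]; congr 1; ring
  have htnk : t nk = s nk / ((x - k - 1) * (x + k)) := by
    rw [ht nk, hck]; congr 1; ring
  have hun : u n = t n - t n1 := hu n (by omega)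
  have hiden : u n = 2 * (x + k) / (x * (x + 2*k + 1)) * (t nk - t n1) := by
    rw [hun, htn, htn1, htnk, h1, h2]
    field_simp
    ring
  have htel : t nk - t n1 = -∑ j ∈ Finset.Icc (nk+1) n1, u j := by
    have h3 : ∑ j ∈ Finset.Icc (nk+1) n1, (t j - t (j-1)) = t n1 - t nk :=
      telescope_sum t n1 nk (by omega)
    have h4 : ∑ j ∈ Finset.Icc (nk+1) n1, u j = ∑ j ∈ Finset.Icc (nk+1) n1, (t j - t (j-1)) := by
      refine Finset.sum_congr rfl fun j hj => ?_
      rw [Finset.mem_Icc] at hj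
      exact hu j (by omega)
    rw [h4, h3]; ring
  have hsum : |∑ j ∈ Finset.Icc (nk+1) n1, u j| ≤ (k : ℝ) * B := by
    calc |∑ j ∈ Finset.Icc (nk+1) n1, u j| ≤ ∑ j ∈ Finset.Icc (nk+1) n1, |u j| :=
          Finset.abs_sum_le_sum_abs _ _
      _ ≤ (Finset.Icc (nk+1) n1).card • B := by
          refine Finset.sum_le_card_nsmul _ _ _ fun j hj => ?_
          rw [Finset.mem_Icc] at hj
          exact hw j (by omega) (by omega)
      _ = (k : ℝ) * B := by
          rw [Nat.card_Icc, nsmul_eq_mul]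
          congr 1
          have : n1 + 1 - (nk + 1) = k := by omega
          rw [this]
  have hc_pos : 0 ≤ 2 * (x + k) / (x * (x + 2*k + 1)) := by positivity
  have hcle : 2 * (x + k) / (x * (x + 2*k + 1)) ≤ 2 / x := by
    rw [div_le_div_iff₀ (by nlinarith) (by linarith)]
    nlinarith
  calc |u n| = 2 * (x + k) / (x * (x + 2*k + 1)) * |t nk - t n1| := by
        rw [hiden, abs_mul, abs_of_nonneg hc_pos]
    _ ≤ 2 * (x + k) / (x * (x + 2*k + 1)) * ((k:ℝ) * B) := by
        apply mul_le_mul_of_nonneg_left _ hc_pos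
        rw [htel, abs_neg]; exact hsum
    _ ≤ 2 / x * ((k:ℝ) * B) := by
        apply mul_le_mul_of_nonneg_right hcle (by positivity)
    _ = 2 * k * B / x := by ring

private lemma pow_div_fact_antitone : ∀ a b : ℕ, 1 ≤ a → a ≤ b →
    (2:ℝ)^b / b.factorial ≤ (2:ℝ)^a / a.factorial := by
  intro a b ha hab
  induction b, hab using Nat.le_induction with
  | base => exact le_refl _
  | succ b hab ih =>
    refine le_trans ?_ ih
    rw [pow_succ, Nat.factorial_succ]
    push_cast
    have hb : (2:ℝ) ≤ (b:ℝ) + 1 := by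
      have h1 : 1 ≤ b := le_trans ha hab
      have : (1:ℝ) ≤ (b:ℝ) := by exact_mod_cast h1
      linarith
    have h1 : (0:ℝ) < (b.factorial : ℝ) := by
      exact_mod_cast b.factorial_pos
    calc (2:ℝ)^b * 2 / (((b:ℝ)+1) * b.factorial) ≤ (2:ℝ)^b * 2 / (2 * b.factorial) := by
          gcongr
    _ = (2:ℝ)^b / b.factorial := by field_simp

private lemma pow_div_fact_superadd (p e : ℕ) :
    (2:ℝ)^(p+e) / (p+e).factorial ≤ (2:ℝ)^p / p.factorial * ((2:ℝ)^e / e.factorial) := by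
  have hd : (p.factorial * e.factorial : ℕ) ≤ (p+e).factorial :=
    Nat.le_of_dvd (p+e).factorial_pos (Nat.factorial_mul_factorial_dvd_factorial_add p e)
  rw [pow_add, div_mul_div_comm]
  gcongr
  exact_mod_cast hd

private lemma parking_claimA (k : ℕ) (hk : 1 ≤ k) (u : ℕ → ℝ) (M : ℝ)
    (hM0 : 0 ≤ M)
    (hMub : ∀ i : ℕ, 2 ≤ i → i ≤ 2*k → |u i| ≤ M)
    (key : ∀ n : ℕ, k + 2 ≤ n → ∀ B : ℝ, 0 ≤ B →
      (∀ j : ℕ, n - k ≤ j → j ≤ n - 1 → |u j| ≤ B) → |u n| ≤ 2 * k * B / n) :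
    ∀ m : ℕ, 2 ≤ m → |u m| ≤ M * 2^((m-2)/k) / (((m-2)/k).factorial : ℝ) := by
  intro m
  induction m using Nat.strong_induction_on with
  | _ m ih =>
    intro hm
    set P := (m-2)/k with hPdef
    by_cases hsmall : m ≤ 2*k
    · have hub := hMub m hm hsmall
      have hP : P ≤ 1 := by
        have : (m-2)/k < 2 := (Nat.div_lt_iff_lt_mul (by omega)).mpr (by omega)
        omega
      rcases Nat.le_one_iff_eq_zero_or_eq_one.mp hP with h | h <;> rw [h]
      · simpa using hub
      · have : |u m| ≤ M * 2 := by nlinarith [abs_nonneg (u m)]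
        simpa [Nat.factorial] using this
    · -- m ≥ 2k+1
      have hPk : P * k ≤ m - 2 := Nat.div_mul_le_self _ _
      have hP1 : 1 ≤ P := by
        rw [hPdef, Nat.le_div_iff_mul_le (by omega : 0 < k)]
        omega
      rcases Nat.lt_or_ge P 2 with hP2 | hP2
      · -- P = 1, so m = 2k+1
        have hPe : P = 1 := by omega
        have hm21 : m = 2*k + 1 := by
          have h1 : m - 2 < 2 * k := by
            by_contra hcon
            push_neg at hcon
            have : 2 ≤ P := by
              rw [hPdef, Nat.le_div_iff_mul_le (by omega : 0 < k)]; omega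
            omega
          omega
        have hkey := key m (by omega) M hM0 (fun j hj1 hj2 => hMub j (by omega) (by omega))
        rw [hPe]
        have hmr : (m:ℝ) = 2*k + 1 := by exact_mod_cast congrArg (Nat.cast (R := ℝ)) hm21
        have hkr : (1:ℝ) ≤ (k:ℝ) := by exact_mod_cast hk
        have : 2 * (k:ℝ) * M / (m:ℝ) ≤ M * 2 := by
          rw [hmr, div_le_iff₀ (by linarith)]
          nlinarith
        have := le_trans hkey this
        simpa [Nat.factorial] using this
      · -- P ≥ 2
        obtain ⟨Q, hQ⟩ : ∃ Q, P = Q + 1 := ⟨P - 1, by omega⟩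
        have hQ1 : 1 ≤ Q := by omega
        set B : ℝ := M * 2^Q / (Q.factorial : ℝ) with hBdef
        have hB0 : 0 ≤ B := by positivity
        have hwin : ∀ j : ℕ, m - k ≤ j → j ≤ m - 1 → |u j| ≤ B := by
          intro j hj1 hj2
          have hj2' : 2 ≤ j := by omega
          have hjlt : j < m := by omega
          have hPj1 : Q ≤ (j-2)/k := by
            rw [Nat.le_div_iff_mul_le (by omega : 0 < k)]
            have h5 : (Q+1) * k ≤ m - 2 := by rw [← hQ]; exact hPk
            have h6 : (Q+1) * k = Q*k + k := by ring
            omega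
          have hPj2 : (j-2)/k ≤ P := by
            rw [hPdef]
            exact Nat.div_le_div_right (by omega)
          have hIH := ih j hjlt hj2'
          calc |u j| ≤ M * 2^((j-2)/k) / (((j-2)/k).factorial : ℝ) := hIH
            _ ≤ M * 2^Q / (Q.factorial : ℝ) := by
                have := pow_div_fact_antitone Q ((j-2)/k) hQ1 hPj1
                calc M * 2^((j-2)/k) / (((j-2)/k).factorial : ℝ)
                    = M * ((2:ℝ)^((j-2)/k) / (((j-2)/k).factorial : ℝ)) := by ring
                  _ ≤ M * ((2:ℝ)^Q / (Q.factorial : ℝ)) := by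
                      exact mul_le_mul_of_nonneg_left this hM0
                  _ = M * 2^Q / (Q.factorial : ℝ) := by ring
        have hkey := key m (by omega) B hB0 hwin
        have hmP : ((Q:ℝ) + 1) * k ≤ (m:ℝ) := by
          have h5 : (Q+1) * k ≤ m - 2 := by rw [← hQ]; exact hPk
          have : (Q + 1) * k ≤ m := by omega
          exact_mod_cast this
        have hkpos : (0:ℝ) < (k:ℝ) := by exact_mod_cast hk
        have hQpos : (0:ℝ) < (Q:ℝ) + 1 := by positivity
        calc |u m| ≤ 2 * (k:ℝ) * B / (m:ℝ) := hkey
          _ ≤ 2 * (k:ℝ) * B / (((Q:ℝ) + 1) * k) := by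
              gcongr
          _ = 2 * B / ((Q:ℝ) + 1) := by
              field_simp
          _ = M * 2^P / (P.factorial : ℝ) := by
              rw [hQ, hBdef, Nat.factorial_succ, pow_succ]
              push_cast
              field_simp

private lemma block_sum_eq (k : ℕ) (hk : 1 ≤ k) (h : ℕ → ℝ) :
    ∀ N : ℕ, ∑ i ∈ Finset.range (k*N), h (i/k) = k * ∑ m ∈ Finset.range N, h m := by
  intro N
  induction N with
  | zero => simp
  | succ N ihN =>
    have hconst : ∑ i ∈ Finset.Ico (k*N) (k*N + k), h (i/k) = k * h N := by
      have h1 : ∀ i ∈ Finset.Ico (k*N) (k*N + k), h (i/k) = h N := by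
        intro i hi
        rw [Finset.mem_Ico] at hi
        have hc : N * k = k * N := Nat.mul_comm N k
        have hc2 : (N+1) * k = N*k + k := by ring
        congr 1
        exact Nat.div_eq_of_lt_le (by omega) (by omega)
      rw [Finset.sum_congr rfl h1, Finset.sum_const, Nat.card_Ico, nsmul_eq_mul]
      have : k*N + k - k*N = k := by omega
      rw [this]
    have hsplit : k*(N+1) = k*N + k := by ring
    rw [hsplit, ← Finset.sum_range_add_sum_Ico _ (Nat.le_add_right (k*N) k), ihN,
      Finset.sum_range_succ, hconst]
    ring

private lemma block_sum_le (k : ℕ) (hk : 1 ≤ k) (h : ℕ → ℝ) (hh : ∀ m, 0 ≤ h m) (N : ℕ) :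
    ∑ i ∈ Finset.range N, h (i/k) ≤ k * ∑ m ∈ Finset.range N, h m := by
  rw [← block_sum_eq k hk h N]
  apply Finset.sum_le_sum_of_subset_of_nonneg
  · exact Finset.range_subset_range.mpr (Nat.le_mul_of_pos_left N (by omega))
  · intro i _ _; exact hh _

private lemma parking_termwise (k : ℕ) (hk : 1 ≤ k) (u : ℕ → ℝ) (M : ℝ) (hM0 : 0 ≤ M)
    (hMub : ∀ i, 2 ≤ i → i ≤ 2*k → |u i| ≤ M)
    (claimA : ∀ m, 2 ≤ m → |u m| ≤ M * 2^((m-2)/k) / (((m-2)/k).factorial : ℝ))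
    (n p q : ℕ) (hn : n = p*k + q) (hq2 : 2 ≤ q) (hqk : q ≤ k+1) (i : ℕ) :
    |u (n+i)| ≤ M * 2^p / (p.factorial : ℝ) * ((2:ℝ)^(i/k) / ((i/k).factorial : ℝ)) := by
  have hcomm : p*k = k*p := Nat.mul_comm p k
  have hdiv : (n+i-2)/k = p + (q-2+i)/k := by
    have hrw : n+i-2 = k*p + (q-2+i) := by omega
    rw [hrw, Nat.mul_add_div (by omega)]
  set d := (q-2+i)/k with hddef
  set e := i/k with hedef
  have hed : e ≤ d := Nat.div_le_div_right (by omega)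
  by_cases hpe : p + e = 0
  · have hp0 : p = 0 := Nat.eq_zero_of_add_eq_zero_right hpe
    have he0 : e = 0 := Nat.eq_zero_of_add_eq_zero_left hpe
    have he0' : i / k = 0 := by rw [← hedef]; exact he0
    have hik : i < k := by
      by_contra hcon
      push_neg at hcon
      rw [Nat.div_eq_zero_iff] at he0'
      omega
    have hnq : n = q := by rw [hn, hp0]; simp
    have hm2k : n + i ≤ 2*k := by omega
    have hb := hMub (n+i) (by omega) hm2k
    rw [hp0, he0]
    simpa using hb
  · have h1pe : 1 ≤ p + e := Nat.one_le_iff_ne_zero.mpr hpe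
    have hA := claimA (n+i) (by omega)
    rw [hdiv] at hA
    calc |u (n+i)| ≤ M * 2^(p+d) / ((p+d).factorial : ℝ) := hA
      _ = M * ((2:ℝ)^(p+d) / ((p+d).factorial : ℝ)) := by ring
      _ ≤ M * ((2:ℝ)^(p+e) / ((p+e).factorial : ℝ)) :=
          mul_le_mul_of_nonneg_left (pow_div_fact_antitone (p+e) (p+d) h1pe (by omega)) hM0
      _ ≤ M * ((2:ℝ)^p / (p.factorial : ℝ) * ((2:ℝ)^e / (e.factorial : ℝ))) :=
          mul_le_mul_of_nonneg_left (pow_div_fact_superadd p e) hM0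
      _ = M * 2^p / (p.factorial : ℝ) * ((2:ℝ)^e / (e.factorial : ℝ)) := by ring

/-- Rényi parking, discrete model: writing `n = pₙ·k + q` with `pₙ ≥ 0` and
`2 ≤ q ≤ k+1`, the `n`-th tail of the series `Σ u i` satisfies
`|Σ_{i=n}^{∞} u i| ≤ M·k·e² · 2^{pₙ} / pₙ!`, where
`M = max{|u i| : 2 ≤ i ≤ 2k}`. -/
theorem parking_tail_bound
    (k r : ℕ) (hk : 1 ≤ k) (hkr : k ≤ r) (hrk : r ≤ 2 * k)
    (a s t u : ℕ → ℝ)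
    (ha_init : ∀ n : ℕ, 1 ≤ n → n ≤ k + 1 →
      a n = if n = r - k + 1 then 1 else 0)
    (ha_rec : ∀ n : ℕ, k + 2 ≤ n →
      a n = 2 / ((n : ℝ) - k - 1) * ∑ i ∈ Finset.Icc 1 (n - k - 1), a i)
    (hs : ∀ n : ℕ, s n = ∑ i ∈ Finset.Icc 1 n, a i)
    (ht : ∀ n : ℕ, t n = s n / ((n : ℝ) * ((n : ℝ) + 2 * k + 1)))
    (hu : ∀ n : ℕ, 2 ≤ n → u n = t n - t (n - 1))
    (M : ℝ)
    (hM : IsGreatest {x : ℝ | ∃ i : ℕ, 2 ≤ i ∧ i ≤ 2 * k ∧ x = |u i|} M) :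
    ∀ n p q : ℕ, 2 ≤ n → n = p * k + q → 2 ≤ q → q ≤ k + 1 →
      |∑' i : ℕ, u (n + i)| ≤
        M * k * Real.exp 2 * 2 ^ p / (p.factorial : ℝ) := by
  intro n p q hn2 hnpq hq2 hqk
  obtain ⟨i0, hi02, hi0k, hMeq⟩ := hM.1
  have hM0 : 0 ≤ M := by rw [hMeq]; exact abs_nonneg _
  have hMub : ∀ i, 2 ≤ i → i ≤ 2*k → |u i| ≤ M := fun i h1 h2 => hM.2 ⟨i, h1, h2, rfl⟩
  have key : ∀ m : ℕ, k + 2 ≤ m → ∀ B : ℝ, 0 ≤ B →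
      (∀ j : ℕ, m - k ≤ j → j ≤ m - 1 → |u j| ≤ B) → |u m| ≤ 2 * k * B / m :=
    fun m hm B hB hw => parking_key k hk a s t u ha_rec hs ht hu m hm B hB hw
  have claimA := parking_claimA k hk u M hM0 hMub key
  have hterm : ∀ i : ℕ, |u (n+i)| ≤
      M * 2^p / (p.factorial : ℝ) * ((2:ℝ)^(i/k) / ((i/k).factorial : ℝ)) :=
    parking_termwise k hk u M hM0 hMub claimA n p q hnpq hq2 hqk
  set C0 := M * 2^p / (p.factorial : ℝ) with hC0
  have hC00 : 0 ≤ C0 := by rw [hC0]; positivity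
  have hpartial : ∀ N, ∑ i ∈ Finset.range N, |u (n+i)| ≤
      M * k * Real.exp 2 * 2^p / (p.factorial : ℝ) := by
    intro N
    calc ∑ i ∈ Finset.range N, |u (n+i)|
        ≤ ∑ i ∈ Finset.range N, C0 * ((2:ℝ)^(i/k) / ((i/k).factorial : ℝ)) :=
          Finset.sum_le_sum (fun i _ => hterm i)
      _ = C0 * ∑ i ∈ Finset.range N, ((2:ℝ)^(i/k) / ((i/k).factorial : ℝ)) := by
          rw [Finset.mul_sum]
      _ ≤ C0 * ((k:ℝ) * ∑ m ∈ Finset.range N, ((2:ℝ)^m / (m.factorial : ℝ))) := by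
          refine mul_le_mul_of_nonneg_left ?_ hC00
          exact block_sum_le k hk (fun m => (2:ℝ)^m / (m.factorial : ℝ))
            (fun m => by positivity) N
      _ ≤ C0 * ((k:ℝ) * Real.exp 2) := by
          refine mul_le_mul_of_nonneg_left ?_ hC00
          refine mul_le_mul_of_nonneg_left ?_ (by positivity)
          exact Real.sum_le_exp_of_nonneg (by norm_num) N
      _ = M * k * Real.exp 2 * 2^p / (p.factorial : ℝ) := by rw [hC0]; ring
  have hsummable : Summable (fun i => |u (n+i)|) :=
    summable_of_sum_range_le (fun i => abs_nonneg _) hpartial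
  have h1 : |∑' i : ℕ, u (n+i)| ≤ ∑' i : ℕ, |u (n+i)| := by
    simpa [Real.norm_eq_abs] using
      norm_tsum_le_tsum_norm (f := fun i => u (n+i))
        (by simpa [Real.norm_eq_abs] using hsummable)
  exact le_trans h1 (Real.tsum_le_of_sum_range_le (fun i => abs_nonneg _) hpartial)
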